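/- The equation v₋(a) = c₊(a), expressing that the free critical value of f_a equals the other critical point, is a nontrivial polynomial equation in a with exactly four solutions, of the form ±s₀ and ±conj(s₀) for some s₀ in the open first quadrant. -/
import Mathlib

open Complex

noncomputable def S0 : ℂ :=
  (Real.sqrt ((45 + 20 * Real.sqrt 6) / 32) : ℝ) +
  (Real.sqrt ((20 * Real.sqrt 6 - 45) / 32) : ℝ) * Complex.I

lemma h6sq : Real.sqrt 6 ^ 2 = 6 := Real.sq_sqrt (by norm_num)

lemma h6gt : (9:ℝ)/4 < Real.sqrt 6 := by
  nlinarith [h6sq, Real.sqrt_nonneg 6]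

lemma hA_pos : (0:ℝ) < (45 + 20 * Real.sqrt 6) / 32 := by positivity

lemma hB_pos : (0:ℝ) < (20 * Real.sqrt 6 - 45) / 32 := by nlinarith [h6gt]

lemma S0_re_pos : 0 < S0.re := by
  simp [S0]
  positivity

lemma S0_im_pos : 0 < S0.im := by
  simp [S0]
  nlinarith [h6gt]

lemma h15 : ((Real.sqrt 15 : ℝ) : ℂ) ^ 2 = 15 := by
  norm_cast
  exact Real.sq_sqrt (by norm_num)

lemma hw : S0 ^ 2 = 45/16 + 5 * ((Real.sqrt 15 : ℝ) : ℂ) / 16 * Complex.I := by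
  set x := Real.sqrt ((45 + 20 * Real.sqrt 6) / 32)
  set y := Real.sqrt ((20 * Real.sqrt 6 - 45) / 32)
  have hx2 : x ^ 2 = (45 + 20 * Real.sqrt 6) / 32 := Real.sq_sqrt hA_pos.le
  have hy2 : y ^ 2 = (20 * Real.sqrt 6 - 45) / 32 := Real.sq_sqrt hB_pos.le
  have hxy : x * y = 5 * Real.sqrt 15 / 32 := by
    rw [show x * y = Real.sqrt (((45 + 20 * Real.sqrt 6) / 32) * ((20 * Real.sqrt 6 - 45) / 32)) by
      rw [Real.sqrt_mul hA_pos.le]]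
    rw [show ((45 + 20 * Real.sqrt 6) / 32) * ((20 * Real.sqrt 6 - 45) / 32) = (5/32)^2 * 15 by
      linear_combination (25/64) * h6sq]
    rw [Real.sqrt_mul (by positivity), Real.sqrt_sq (by norm_num)]
    ring
  have hre : x ^ 2 - y ^ 2 = 45/16 := by linear_combination hx2 - hy2
  have him : 2 * (x * y) = 5 * Real.sqrt 15 / 16 := by linear_combination 2 * hxy
  have step : S0 ^ 2 = ((x^2 - y^2 : ℝ) : ℂ) + ((2*(x*y) : ℝ) : ℂ) * Complex.I := by
    simp only [S0]
    push_cast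
    linear_combination ((y:ℂ))^2 * Complex.I_sq
  rw [step, hre, him]
  push_cast
  ring

lemma hw' : (starRingEnd ℂ) S0 ^ 2 = 45/16 - 5 * ((Real.sqrt 15 : ℝ) : ℂ) / 16 * Complex.I := by
  rw [← map_pow, hw]
  simp [map_add, map_mul, map_div₀, map_ofNat, Complex.conj_I, Complex.conj_ofReal]
  ring

lemma hz_w : 8 * (45/16 + 5 * ((Real.sqrt 15 : ℝ) : ℂ) / 16 * Complex.I) ^ 2
    - 45 * (45/16 + 5 * ((Real.sqrt 15 : ℝ) : ℂ) / 16 * Complex.I) + 75 = 0 := by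
  linear_combination (25 * ((Real.sqrt 15 : ℝ):ℂ)^2 / 32) * Complex.I_sq - (25/32) * h15

lemma hz_wc : 8 * (45/16 - 5 * ((Real.sqrt 15 : ℝ) : ℂ) / 16 * Complex.I) ^ 2
    - 45 * (45/16 - 5 * ((Real.sqrt 15 : ℝ) : ℂ) / 16 * Complex.I) + 75 = 0 := by
  linear_combination (25 * ((Real.sqrt 15 : ℝ):ℂ)^2 / 32) * Complex.I_sq - (25/32) * h15

lemma quart_of (a z : ℂ) (ha : a ^ 2 = z) (hz : 8 * z ^ 2 - 45 * z + 75 = 0) :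
    8 * a ^ 4 - 45 * a ^ 2 + 75 = 0 := by
  linear_combination (8 * a ^ 2 + 8 * z - 45) * ha + hz

lemma sqrt15_pos : (0:ℝ) < Real.sqrt 15 := Real.sqrt_pos.mpr (by norm_num)

lemma exists_s (a : ℂ) (hq : 8 * a ^ 4 - 45 * a ^ 2 + 75 = 0) (hne : 2 * a ^ 2 - 15 ≠ 0) :
    ∃ s : ℂ, s ^ 2 = a ^ 2 - 3 ∧
      ((-a - s) / 3) ^ 3 + a * ((-a - s) / 3) ^ 2 + (-a - s) / 3 = (-a + s) / 3 := by
  refine ⟨-2 * a ^ 3 / (2 * a ^ 2 - 15), ?_, ?_⟩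
  · field_simp
    linear_combination 9 * hq
  · set s := -2 * a ^ 3 / (2 * a ^ 2 - 15) with hsdef
    have hs : s ^ 2 = a ^ 2 - 3 := by
      rw [hsdef]; field_simp; linear_combination 9 * hq
    have hT : 2 * a ^ 3 + (2 * a ^ 2 - 15) * s = 0 := by
      rw [hsdef]; field_simp; ring
    linear_combination (1/27) * hT - (s/27) * hs

lemma ne_w : 2 * S0 ^ 2 - 15 ≠ 0 := by
  intro h
  have h2 : (45/16 + 5 * ((Real.sqrt 15 : ℝ) : ℂ) / 16 * Complex.I) = 15/2 := by
    rw [← hw]; linear_combination (1/2) * h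
  have := congrArg Complex.im h2
  simp at this

lemma ne_wc : 2 * ((starRingEnd ℂ) S0) ^ 2 - 15 ≠ 0 := by
  intro h
  have h2 : (45/16 - 5 * ((Real.sqrt 15 : ℝ) : ℂ) / 16 * Complex.I) = 15/2 := by
    rw [← hw']; linear_combination (1/2) * h
  have := congrArg Complex.im h2
  simp at this

theorem stmt12 :
    ∃ s₀ : ℂ, 0 < s₀.re ∧ 0 < s₀.im ∧
      ∀ a : ℂ,
        (∃ s : ℂ, s ^ 2 = a ^ 2 - 3 ∧
          ((-a - s) / 3) ^ 3 + a * ((-a - s) / 3) ^ 2 + (-a - s) / 3 = (-a + s) / 3) ↔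
        (a = s₀ ∨ a = -s₀ ∨ a = (starRingEnd ℂ) s₀ ∨ a = -((starRingEnd ℂ) s₀)) := by
  refine ⟨S0, S0_re_pos, S0_im_pos, fun a => ⟨?_, ?_⟩⟩
  · rintro ⟨s, hs, hE⟩
    have hT : 2 * a ^ 3 + (2 * a ^ 2 - 15) * s = 0 := by
      linear_combination 27 * hE + s * hs
    have hsq : 4 * a ^ 6 = (a ^ 2 - 3) * (2 * a ^ 2 - 15) ^ 2 := by
      linear_combination (2 * a ^ 3 - (2 * a ^ 2 - 15) * s) * hT + (2 * a ^ 2 - 15) ^ 2 * hs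
    have hquart : 8 * a ^ 4 - 45 * a ^ 2 + 75 = 0 := by
      linear_combination (1/9) * hsq
    have hsum : S0 ^ 2 + ((starRingEnd ℂ) S0) ^ 2 = 45/8 := by
      linear_combination hw + hw'
    have hprod : S0 ^ 2 * ((starRingEnd ℂ) S0) ^ 2 = 75/8 := by
      linear_combination ((starRingEnd ℂ) S0) ^ 2 * hw
        + (45/16 + 5 * ((Real.sqrt 15 : ℝ) : ℂ) / 16 * Complex.I) * hw'
        - (25 * ((Real.sqrt 15 : ℝ) : ℂ) ^ 2 / 256) * Complex.I_sq + (25/256) * h15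
    have hkey : (a - S0) * (a + S0) * (a - (starRingEnd ℂ) S0) * (a + (starRingEnd ℂ) S0) = 0 := by
      linear_combination (1/8) * hquart - a ^ 2 * hsum + hprod
    rcases mul_eq_zero.mp hkey with h | h
    · rcases mul_eq_zero.mp h with h | h
      · rcases mul_eq_zero.mp h with h | h
        · exact Or.inl (sub_eq_zero.mp h)
        · exact Or.inr (Or.inl (eq_neg_of_add_eq_zero_left h))
      · exact Or.inr (Or.inr (Or.inl (sub_eq_zero.mp h)))
    · exact Or.inr (Or.inr (Or.inr (eq_neg_of_add_eq_zero_left h)))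
  · rintro (rfl | rfl | rfl | rfl)
    · exact exists_s _ (quart_of _ _ hw hz_w) ne_w
    · exact exists_s _ (quart_of _ _ (by rw [neg_pow]; simpa using hw) hz_w)
        (by rw [neg_pow]; simpa using ne_w)
    · exact exists_s _ (quart_of _ _ hw' hz_wc) ne_wc
    · exact exists_s _ (quart_of _ _ (by rw [neg_pow]; simpa using hw') hz_wc)
        (by rw [neg_pow]; simpa using ne_wc)
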